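/- If R is a Gelfand G-graded commutative ring, then GMax(R) with the Zariski topology is a Hausdorff space. -/

import Mathlib

section GradedGelfand

variable {G : Type*} [AddGroup G] [DecidableEq G] {R : Type*} [CommRing R]
variable (𝒜 : G → AddSubgroup R) [GradedRing 𝒜]

/-- A homogeneous (graded) prime ideal: a proper graded ideal that is prime
with respect to homogeneous elements. -/
def IsGradedPrime (P : Ideal R) : Prop :=
  P.IsHomogeneous 𝒜 ∧ P ≠ ⊤ ∧
    ∀ a b : R, SetLike.IsHomogeneousElem 𝒜 a → SetLike.IsHomogeneousElem 𝒜 b →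
      a * b ∈ P → a ∈ P ∨ b ∈ P

/-- A graded maximal ideal: a proper graded ideal maximal among proper graded ideals. -/
def IsGradedMaximal (M : Ideal R) : Prop :=
  M.IsHomogeneous 𝒜 ∧ M ≠ ⊤ ∧
    ∀ J : Ideal R, J.IsHomogeneous 𝒜 → M ≤ J → J ≠ ⊤ → J = M

/-- The homogeneous prime spectrum of a graded ring. -/
def GSpec := { P : Ideal R // IsGradedPrime 𝒜 P }

/-- The Zariski topology on the homogeneous prime spectrum, generated by the basic
open sets `D_G(r)` for homogeneous `r`; the closed sets are exactly the `V_G(I)`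
for graded ideals `I`. -/
instance : TopologicalSpace (GSpec 𝒜) :=
  TopologicalSpace.generateFrom
    { U | ∃ r : R, SetLike.IsHomogeneousElem 𝒜 r ∧ U = { P : GSpec 𝒜 | r ∉ P.1 } }

/-- The set of graded maximal ideals inside the homogeneous prime spectrum. -/
def GMax : Set (GSpec 𝒜) := { P | IsGradedMaximal 𝒜 P.1 }

/-- A Gelfand graded ring: every homogeneous prime ideal is contained in a unique
graded maximal ideal. -/
def IsGelfandGraded : Prop :=
  ∀ P : Ideal R, IsGradedPrime 𝒜 P →
    ∃! M : Ideal R, IsGradedMaximal 𝒜 M ∧ P ≤ M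

/-- A pm⁺ graded ring: for every homogeneous prime `P`, the homogeneous primes
containing `P` form a chain. -/
def IsPMPlusGraded : Prop :=
  ∀ P Q Q' : Ideal R, IsGradedPrime 𝒜 P → IsGradedPrime 𝒜 Q → IsGradedPrime 𝒜 Q' →
    P ≤ Q → P ≤ Q' → Q ≤ Q' ∨ Q' ≤ Q

end GradedGelfand

section Statements

variable {G : Type*} [AddGroup G] [DecidableEq G] {R : Type*} [CommRing R]
variable (𝒜 : G → AddSubgroup R) [GradedRing 𝒜]

/-- A graded maximal ideal is graded prime. -/
lemma isGradedMaximal_isGradedPrime {M : Ideal R} (hM : IsGradedMaximal 𝒜 M) :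
    IsGradedPrime 𝒜 M := by
  obtain ⟨hhom, hne, hmax⟩ := hM
  refine ⟨hhom, hne, fun a b ha hb hab => ?_⟩
  by_contra hcon
  push_neg at hcon
  obtain ⟨haM, hbM⟩ := hcon
  have hJhom : (M ⊔ Ideal.span {a}).IsHomogeneous 𝒜 :=
    hhom.sup (Ideal.homogeneous_span 𝒜 {a} (by rintro x rfl; exact ha))
  have hJtop : M ⊔ Ideal.span {a} = ⊤ := by
    by_contra hJ
    have := hmax _ hJhom le_sup_left hJ
    exact haM (this ▸ (le_sup_right : Ideal.span {a} ≤ M ⊔ Ideal.span {a}) (Ideal.subset_span rfl))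
  have h1 : (1 : R) ∈ M ⊔ Ideal.span {a} := hJtop ▸ Submodule.mem_top
  obtain ⟨m, hm, x, hx, hmx⟩ := Submodule.mem_sup.mp h1
  obtain ⟨r, rfl⟩ := Ideal.mem_span_singleton'.mp hx
  have hb' : b = b * m + r * (a * b) := by
    calc b = (m + r * a) * b := by rw [hmx, one_mul]
    _ = b * m + r * (a * b) := by ring
  exact hbM (hb' ▸ M.add_mem (M.mul_mem_left b hm) (M.mul_mem_left r hab))

/-- Separation lemma: distinct graded maximal ideals in a Gelfand graded ring are
separated by homogeneous elements with zero product. -/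
lemma gelfand_sep (h : IsGelfandGraded 𝒜) {M N : Ideal R}
    (hM : IsGradedMaximal 𝒜 M) (hN : IsGradedMaximal 𝒜 N) (hMN : M ≠ N) :
    ∃ a b : R, SetLike.IsHomogeneousElem 𝒜 a ∧ SetLike.IsHomogeneousElem 𝒜 b ∧
      a ∉ M ∧ b ∉ N ∧ a * b = 0 := by
  by_contra hcon
  push_neg at hcon
  -- The collection of homogeneous ideals avoiding all products s*t with
  -- s homogeneous outside M and t homogeneous outside N.
  set S : Set (Ideal R) := {I | I.IsHomogeneous 𝒜 ∧
    ∀ s t : R, SetLike.IsHomogeneousElem 𝒜 s → SetLike.IsHomogeneousElem 𝒜 t →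
      s ∉ M → t ∉ N → s * t ∉ I} with hS
  have hbot : (⊥ : Ideal R) ∈ S := by
    refine ⟨Ideal.IsHomogeneous.bot 𝒜, fun s t hs ht hsM htN hmem => ?_⟩
    exact hcon s t hs ht hsM htN (by simpa using hmem)
  obtain ⟨P, -, hPmax⟩ := zorn_le_nonempty₀ S (fun c hcS hchain y hy => by
    refine ⟨sSup c, ⟨?_, ?_⟩, fun z hz => le_sSup hz⟩
    · rw [sSup_eq_iSup']
      exact Ideal.IsHomogeneous.iSup fun I => (hcS I.2).1
    · intro s t hs ht hsM htN hmem
      obtain ⟨I, hIc, hmemI⟩ :=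
        (Submodule.mem_sSup_of_directed ⟨y, hy⟩ hchain.directedOn).mp hmem
      exact (hcS hIc).2 s t hs ht hsM htN hmemI) ⊥ hbot
  have hPS : P ∈ S := hPmax.prop
  have h1M : (1 : R) ∉ M := fun hh => hM.2.1 ((Ideal.eq_top_iff_one M).mpr hh)
  have h1N : (1 : R) ∉ N := fun hh => hN.2.1 ((Ideal.eq_top_iff_one N).mpr hh)
  have h1 : SetLike.IsHomogeneousElem 𝒜 (1 : R) := SetLike.isHomogeneousElem_one 𝒜
  have hPne : P ≠ ⊤ := fun hPt =>
    hPS.2 1 1 h1 h1 h1M h1N (by rw [one_mul]; exact hPt ▸ Submodule.mem_top)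
  -- key: any homogeneous element outside P lets a "forbidden product" into P ⊔ span{x}
  have key : ∀ x : R, SetLike.IsHomogeneousElem 𝒜 x → x ∉ P →
      ∃ s t : R, SetLike.IsHomogeneousElem 𝒜 s ∧ SetLike.IsHomogeneousElem 𝒜 t ∧
        s ∉ M ∧ t ∉ N ∧ s * t ∈ P ⊔ Ideal.span {x} := by
    intro x hx hxP
    by_contra hk
    push_neg at hk
    have hJ : P ⊔ Ideal.span {x} ∈ S :=
      ⟨hPS.1.sup (Ideal.homogeneous_span 𝒜 {x} (by rintro z rfl; exact hx)),
        fun s t hs ht hsM htN hm => hk s t hs ht hsM htN hm⟩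
    exact hxP (hPmax.2 hJ le_sup_left
      ((le_sup_right : Ideal.span {x} ≤ P ⊔ Ideal.span {x}) (Ideal.subset_span rfl)))
  have hMprime := isGradedMaximal_isGradedPrime 𝒜 hM
  have hNprime := isGradedMaximal_isGradedPrime 𝒜 hN
  -- P is graded prime
  have hPprime : IsGradedPrime 𝒜 P := by
    refine ⟨hPS.1, hPne, fun a b ha hb hab => ?_⟩
    by_contra hc
    push_neg at hc
    obtain ⟨haP, hbP⟩ := hc
    obtain ⟨s1, t1, hs1, ht1, hs1M, ht1N, huP⟩ := key a ha haP
    obtain ⟨s2, t2, hs2, ht2, hs2M, ht2N, hvP⟩ := key b hb hbP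
    obtain ⟨p, hp, xa, hxa, hpu⟩ := Submodule.mem_sup.mp huP
    obtain ⟨q, hq, xb, hxb, hqv⟩ := Submodule.mem_sup.mp hvP
    obtain ⟨r, rfl⟩ := Ideal.mem_span_singleton'.mp hxa
    obtain ⟨r', rfl⟩ := Ideal.mem_span_singleton'.mp hxb
    have heq : (s1 * t1) * (s2 * t2) =
        p * (s2 * t2) + (r * a) * q + (r * r') * (a * b) := by
      rw [← hpu, ← hqv]; ring
    have hmem : (s1 * s2) * (t1 * t2) ∈ P := by
      rw [show (s1 * s2) * (t1 * t2) = (s1 * t1) * (s2 * t2) by ring, heq]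
      exact P.add_mem (P.add_mem (Ideal.mul_mem_right _ P hp)
        (Ideal.mul_mem_left P _ hq)) (Ideal.mul_mem_left P _ hab)
    have hs12M : s1 * s2 ∉ M := fun hh => by
      rcases hMprime.2.2 s1 s2 hs1 hs2 hh with h' | h'
      exacts [hs1M h', hs2M h']
    have ht12N : t1 * t2 ∉ N := fun hh => by
      rcases hNprime.2.2 t1 t2 ht1 ht2 hh with h' | h'
      exacts [ht1N h', ht2N h']
    exact hPS.2 _ _ (SetLike.IsHomogeneousElem.mul hs1 hs2)
      (SetLike.IsHomogeneousElem.mul ht1 ht2) hs12M ht12N hmem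
  -- homogeneous elements of P lie in both M and N, hence P ≤ M and P ≤ N
  have hhomM : ∀ z : R, SetLike.IsHomogeneousElem 𝒜 z → z ∈ P → z ∈ M := by
    intro z hz hzP
    by_contra hzM
    exact hPS.2 z 1 hz h1 hzM h1N (by rwa [mul_one])
  have hhomN : ∀ z : R, SetLike.IsHomogeneousElem 𝒜 z → z ∈ P → z ∈ N := by
    intro z hz hzP
    by_contra hzN
    exact hPS.2 1 z h1 hz h1M hzN (by rwa [one_mul])
  have hPle : ∀ (Q : Ideal R), (∀ z : R, SetLike.IsHomogeneousElem 𝒜 z → z ∈ P → z ∈ Q) →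
      P ≤ Q := by
    intro Q hQ x hxP
    classical
    rw [← DirectSum.sum_support_decompose 𝒜 x]
    exact Ideal.sum_mem _ fun i _ =>
      hQ _ (SetLike.isHomogeneousElem_coe _) (hPS.1 i hxP)
  obtain ⟨Mu, -, huniq⟩ := h P hPprime
  exact hMN ((huniq M ⟨hM, hPle M hhomM⟩).trans (huniq N ⟨hN, hPle N hhomN⟩).symm)

theorem stmt_7 (h : IsGelfandGraded 𝒜) :
    T2Space (GMax 𝒜 : Set (GSpec 𝒜)) := by
  constructor
  rintro ⟨x, hx⟩ ⟨y, hy⟩ hxy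
  have hne : x.1 ≠ y.1 := fun hh => hxy (by ext1; exact Subtype.ext hh)
  obtain ⟨a, b, ha, hb, haM, hbN, hab⟩ := gelfand_sep 𝒜 h hx hy hne
  refine ⟨Subtype.val ⁻¹' {P : GSpec 𝒜 | a ∉ P.1},
          Subtype.val ⁻¹' {P : GSpec 𝒜 | b ∉ P.1},
          (IsOpen.preimage continuous_subtype_val
            (TopologicalSpace.GenerateOpen.basic _ ⟨a, ha, rfl⟩)),
          (IsOpen.preimage continuous_subtype_val
            (TopologicalSpace.GenerateOpen.basic _ ⟨b, hb, rfl⟩)),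
          haM, hbN, ?_⟩
  rw [Set.disjoint_left]
  rintro ⟨z, hz⟩ haz hbz
  obtain ⟨_, _, hprime⟩ := isGradedMaximal_isGradedPrime 𝒜 hz
  rcases hprime a b ha hb (hab ▸ z.1.zero_mem) with hc | hc
  · exact haz hc
  · exact hbz hc
end Statements
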